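/- Every Banach sequence space is order continuous: if a net decreases to 0 in order, then it converges to 0 in norm. -/

import Mathlib

open Filter Finset

/-- Every Banach sequence space (a Banach lattice whose order is given by a Schauder basis,
with coordinate functionals `c` and basis vectors `e`) is order continuous: every net
decreasing to `0` in order converges to `0` in norm. -/
theorem stmt7 {X : Type*} [NormedAddCommGroup X] [Lattice X] [HasSolidNorm X] [IsOrderedAddMonoid X] [NormedSpace ℝ X] [CompleteSpace X]
    (c : ℕ → (X →L[ℝ] ℝ)) (e : ℕ → X)
    (hbasis : ∀ x : X, Filter.Tendsto
      (fun n => ∑ i ∈ Finset.range n, c i x • e i) Filter.atTop (nhds x))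
    (huniq : ∀ i j, c i (e j) = if i = j then 1 else 0)
    (horder : ∀ x : X, 0 ≤ x ↔ ∀ i, 0 ≤ c i x)
    {ι : Type*} [Nonempty ι] [Preorder ι] [IsDirected ι (· ≤ ·)]
    (x : ι → X) (hanti : Antitone x) (hinf : IsGLB (Set.range x) 0) :
    Filter.Tendsto (fun α => ‖x α‖) Filter.atTop (nhds 0) := by
  have hc_sum : ∀ (j n : ℕ) (y : X),
      c j (∑ i ∈ Finset.range n, c i y • e i) = if j < n then c j y else 0 := by
    intro j n y
    rw [map_sum]
    have h1 : ∀ i ∈ Finset.range n, c j (c i y • e i) = if j = i then c i y else 0 := by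
      intro i _
      rw [map_smul, huniq j i, smul_eq_mul, mul_ite, mul_one, mul_zero]
    rw [Finset.sum_congr rfl h1, Finset.sum_ite_eq]
    simp [Finset.mem_range]
  have hpos : ∀ α, (0:X) ≤ x α := fun α => hinf.1 ⟨α, rfl⟩
  have hcnn : ∀ i α, 0 ≤ c i (x α) := fun i α => (horder _).1 (hpos α) i
  have hcmono : ∀ (i : ℕ) {a b : X}, a ≤ b → c i a ≤ c i b := by
    intro i a b hab
    have h := (horder (b - a)).1 (sub_nonneg.2 hab) i
    rw [map_sub] at h; linarith
  have hcoord : ∀ i, Tendsto (fun α => c i (x α)) atTop (nhds 0) := by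
    intro i
    rw [NormedAddCommGroup.tendsto_nhds_zero]
    intro ε hε
    have hex : ∃ α₀, c i (x α₀) < ε := by
      by_contra hcon
      push_neg at hcon
      have hlb : ε • e i ∈ lowerBounds (Set.range x) := by
        rintro _ ⟨α, rfl⟩
        rw [← sub_nonneg, horder]
        intro j
        rw [map_sub, map_smul, huniq j i, smul_eq_mul]
        by_cases hji : j = i
        · subst hji
          have := hcon α
          simp only [if_true, eq_self_iff_true, mul_one]
          linarith
        · simp only [if_neg hji, mul_zero, sub_zero]
          exact hcnn j α
      have hle0 : ε • e i ≤ 0 := hinf.2 hlb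
      have h2 := (horder (-(ε • e i))).1 (neg_nonneg.2 hle0) i
      rw [map_neg, map_smul, huniq i i, if_pos rfl, smul_eq_mul, mul_one] at h2
      linarith
    obtain ⟨α₀, hα₀⟩ := hex
    filter_upwards [Filter.eventually_ge_atTop α₀] with α hα
    have h1 : c i (x α) ≤ c i (x α₀) := hcmono i (hanti hα)
    rw [Real.norm_eq_abs, abs_of_nonneg (hcnn i α)]
    linarith
  suffices h : Tendsto x atTop (nhds 0) by
    simpa using h.norm
  rw [NormedAddCommGroup.tendsto_nhds_zero]
  intro ε hε
  obtain ⟨α₀⟩ := ‹Nonempty ι›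
  obtain ⟨n, hn⟩ := (Metric.tendsto_atTop.1 (hbasis (x α₀))) (ε/2) (by linarith)
  have hn' : ‖x α₀ - ∑ i ∈ Finset.range n, c i (x α₀) • e i‖ < ε/2 := by
    have h := hn n le_rfl
    rwa [dist_eq_norm, norm_sub_rev] at h
  have hS : Tendsto (fun α => ∑ i ∈ Finset.range n, c i (x α) • e i) atTop (nhds 0) := by
    have h : Tendsto (fun α => ∑ i ∈ Finset.range n, c i (x α) • e i) atTop
        (nhds (∑ i ∈ Finset.range n, (0:ℝ) • e i)) :=
      tendsto_finset_sum _ (fun i _ => (hcoord i).smul_const (e i))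
    simpa using h
  have hSev := (NormedAddCommGroup.tendsto_nhds_zero.1 hS) (ε/2) (by linarith)
  filter_upwards [hSev, Filter.eventually_ge_atTop α₀] with α h1 h2
  have h0a : (0:X) ≤ x α - ∑ i ∈ Finset.range n, c i (x α) • e i := by
    rw [horder]; intro j
    rw [map_sub, hc_sum]
    by_cases hj : j < n <;> simp [hj, hcnn]
  have hle : x α - ∑ i ∈ Finset.range n, c i (x α) • e i
      ≤ x α₀ - ∑ i ∈ Finset.range n, c i (x α₀) • e i := by
    rw [← sub_nonneg, horder]; intro j
    simp only [map_sub, hc_sum]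
    by_cases hj : j < n
    · simp [hj]
    · simp only [if_neg hj]
      have := hcmono j (hanti h2)
      linarith
  have key : ‖x α - ∑ i ∈ Finset.range n, c i (x α) • e i‖
      ≤ ‖x α₀ - ∑ i ∈ Finset.range n, c i (x α₀) • e i‖ :=
    HasSolidNorm.solid (by rwa [abs_of_nonneg h0a, abs_of_nonneg (h0a.trans hle)])
  have hxeq : x α = (∑ i ∈ Finset.range n, c i (x α) • e i)
      + (x α - ∑ i ∈ Finset.range n, c i (x α) • e i) := by abel
  calc ‖x α‖ = ‖(∑ i ∈ Finset.range n, c i (x α) • e i)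
      + (x α - ∑ i ∈ Finset.range n, c i (x α) • e i)‖ := by rw [← hxeq]
    _ ≤ ‖∑ i ∈ Finset.range n, c i (x α) • e i‖
      + ‖x α - ∑ i ∈ Finset.range n, c i (x α) • e i‖ := norm_add_le _ _
    _ < ε/2 + ε/2 := by exact add_lt_add_of_lt_of_le h1 (key.trans_lt hn').le |>.trans_le le_rfl
    _ = ε := by ring
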